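/- Let F : ℂⁿ × ℂ → ℂ be holomorphic near 0, X = F⁻¹(0) ∖ ({0}×ℂ) a smooth hypersurface (∇F ≠ 0 on X), and ρ a smooth nonnegative control function with ρ⁻¹(0) = {0}×ℂ. Suppose that along X near {0}×ℂ: (a) the pair (X, {0}×ℂ) is Whitney (a)-regular, and (b) |(∇_z ρ|_X)_t| ≪ |∇_z ρ|_X| as (z,t) → {0}×ℂ in X, where ∇_z ρ|_X = ∇_z ρ − (⟨∇_z ρ, ∇F⟩/|∇F|²)∇F and (∇_z ρ|_X)_t = −(⟨∇_z ρ, ∇F⟩/|∇F|²)·∂F/∂t. Then |∂F/∂t| ≪ ‖∇F ∧ ∇_z ρ‖ / |∇_z ρ| as (z,t) → {0}×ℂ in X. -/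

import Mathlib

open Asymptotics
open scoped InnerProductSpace

/-- STATEMENT 14 ((ii) ⇒ (iii) in the criterion for Bekka (c)-regularity), stated in
gradient form.  Along the filter `l` of points of `X = F⁻¹(0) ∖ ({0}×ℂ)` approaching
`{0}×ℂ`, write `v = ∇_z F`, `u = ∂F/∂t` (so the full gradient is `∇F = (v,u)`, with
`‖∇F‖² = ‖v‖² + |u|²`) and `w = ∇_z ρ`.  Since `w` has zero `t`-component,
`⟨∇_z ρ, ∇F⟩ = ⟪w, v⟫` and `‖∇F ∧ ∇_z ρ‖² = ‖∇F‖²‖w‖² − |⟪w,v⟫|²`.  Assume: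
`∇F ≠ 0` and `w ≠ 0` along `l`;
(a) Whitney (a)-regularity in the form `|∂F/∂t| ≪ ‖∇F‖`; and
(b) `|(∇_z ρ|_X)_t| = |⟪w,v⟫|·|u|/‖∇F‖² ≪ ‖∇_z ρ|_X‖ = ‖∇F ∧ ∇_z ρ‖/‖∇F‖`.
Then `|∂F/∂t| ≪ ‖∇F ∧ ∇_z ρ‖ / ‖∇_z ρ‖`. -/
theorem c_regularity_criterion (n : ℕ) {P : Type*} (l : Filter P)
    (u : P → ℂ) (v w : P → EuclideanSpace ℂ (Fin n))
    (hgrad : ∀ᶠ p in l, ¬(v p = 0 ∧ u p = 0))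
    (hw : ∀ᶠ p in l, w p ≠ 0)
    (ha : (fun p => ‖u p‖) =o[l] fun p => Real.sqrt (‖v p‖ ^ 2 + ‖u p‖ ^ 2))
    (hb : (fun p => ‖⟪w p, v p⟫_ℂ‖ * ‖u p‖ / (‖v p‖ ^ 2 + ‖u p‖ ^ 2)) =o[l]
      fun p => Real.sqrt ((‖v p‖ ^ 2 + ‖u p‖ ^ 2) * ‖w p‖ ^ 2 - ‖⟪w p, v p⟫_ℂ‖ ^ 2) /
        Real.sqrt (‖v p‖ ^ 2 + ‖u p‖ ^ 2)) :
    (fun p => ‖u p‖) =o[l]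
      fun p => Real.sqrt ((‖v p‖ ^ 2 + ‖u p‖ ^ 2) * ‖w p‖ ^ 2 - ‖⟪w p, v p⟫_ℂ‖ ^ 2) /
        ‖w p‖ := by
  rw [isLittleO_iff]
  intro ε hε
  rw [isLittleO_iff] at ha hb
  have hs3 : (0:ℝ) < Real.sqrt 3 := Real.sqrt_pos.mpr (by norm_num)
  filter_upwards [hgrad, hw, ha (show (0:ℝ) < ε * (Real.sqrt 3 / 2) by positivity),
    hb (half_pos hε)] with p hg hwp ha' hb'
  set c := ‖⟪w p, v p⟫_ℂ‖ with hcdef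
  have hc0 : 0 ≤ c := norm_nonneg _
  have hN2 : 0 < ‖v p‖ ^ 2 + ‖u p‖ ^ 2 := by
    rcases not_and_or.mp hg with h | h
    · have h' : 0 < ‖v p‖ := norm_pos_iff.mpr h
      positivity
    · have h' : 0 < ‖u p‖ := norm_pos_iff.mpr h
      positivity
  set N2 := ‖v p‖ ^ 2 + ‖u p‖ ^ 2 with hN2def
  have hW : 0 < ‖w p‖ := norm_pos_iff.mpr hwp
  have hN : 0 < Real.sqrt N2 := Real.sqrt_pos.mpr hN2
  have hNsq : Real.sqrt N2 ^ 2 = N2 := Real.sq_sqrt hN2.le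
  have hvN : ‖v p‖ ≤ Real.sqrt N2 := by
    rw [show ‖v p‖ = Real.sqrt (‖v p‖ ^ 2) by rw [Real.sqrt_sq (norm_nonneg _)]]
    exact Real.sqrt_le_sqrt (by nlinarith [sq_nonneg ‖u p‖])
  have hcs : c ≤ ‖w p‖ * Real.sqrt N2 :=
    le_trans (norm_inner_le_norm _ _) (mul_le_mul_of_nonneg_left hvN hW.le)
  have hSnn : 0 ≤ N2 * ‖w p‖ ^ 2 - c ^ 2 := by nlinarith [hcs, hc0, hNsq, hW.le, hN.le]
  set S := Real.sqrt (N2 * ‖w p‖ ^ 2 - c ^ 2) with hSdef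
  have hS0 : 0 ≤ S := Real.sqrt_nonneg _
  have hSsq : S ^ 2 = N2 * ‖w p‖ ^ 2 - c ^ 2 := Real.sq_sqrt hSnn
  rw [Real.norm_of_nonneg (norm_nonneg _), Real.norm_of_nonneg (by positivity : (0:ℝ) ≤ S / ‖w p‖)]
  rw [Real.norm_of_nonneg (norm_nonneg _), Real.norm_of_nonneg hN.le] at ha'
  rw [Real.norm_of_nonneg (by positivity : (0:ℝ) ≤ c * ‖u p‖ / N2),
    Real.norm_of_nonneg (by positivity : (0:ℝ) ≤ S / Real.sqrt N2)] at hb'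
  rw [← mul_div_assoc, le_div_iff₀ hW]
  rcases le_or_gt (‖w p‖ * Real.sqrt N2 / 2) c with hcase | hcase
  · -- inner product comparable with the product of norms
    have h1 : c * ‖u p‖ ≤ ε / 2 * (S / Real.sqrt N2) * N2 := by
      have := mul_le_mul_of_nonneg_right hb' hN2.le
      rwa [div_mul_cancel₀ _ hN2.ne'] at this
    have h2 : ε / 2 * (S / Real.sqrt N2) * N2 = ε / 2 * S * Real.sqrt N2 := by
      have hNm : Real.sqrt N2 * Real.sqrt N2 = N2 := Real.mul_self_sqrt hN2.le
      field_simp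
      linear_combination (-S) * hNsq
    rw [h2] at h1
    have h6 := mul_le_mul_of_nonneg_right hcase (norm_nonneg (u p))
    nlinarith [h1, h6, hN]
  · -- inner product small: S is comparable with ‖∇F‖‖w‖
    have h3 : Real.sqrt 3 ^ 2 = 3 := Real.sq_sqrt (by norm_num)
    have hcsq : c ^ 2 ≤ N2 * ‖w p‖ ^ 2 / 4 := by
      have h4 := mul_self_le_mul_self hc0 hcase.le
      nlinarith [hNsq]
    have hS3 : Real.sqrt 3 / 2 * Real.sqrt N2 * ‖w p‖ ≤ S := by
      have hx : (0:ℝ) ≤ Real.sqrt 3 / 2 * Real.sqrt N2 * ‖w p‖ := by positivity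
      rw [hSdef, Real.le_sqrt hx hSnn, mul_pow, mul_pow, div_pow, h3, hNsq]
      norm_num
      linarith [hcsq]
    have h7 := mul_le_mul_of_nonneg_right ha' hW.le
    have h8 := mul_le_mul_of_nonneg_left hS3 hε.le
    calc ‖u p‖ * ‖w p‖ ≤ ε * (Real.sqrt 3 / 2) * Real.sqrt N2 * ‖w p‖ := h7
      _ = ε * (Real.sqrt 3 / 2 * Real.sqrt N2 * ‖w p‖) := by ring
      _ ≤ ε * S := h8
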